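/- arXiv:1511.09291 — 3 statements merged into one kernel-verified Lean document; each statement's English description precedes it below -/
import Mathlib

section
/- Let d ≥ 3 and n ≥ 2 be integers. Let r, s, t be integers with 0 ≤ r ≤ s ≤ t, t ≥ 2, and r + (t - s) ≥ 1, and let m_1, ..., m_t be positive integers with m_1 + ... + m_t = n + 2. Then (1-d)^{n+2} ≠ 1 - r - d(t-s) + ∑_{i=1}^r (1-d)^{m_i}. -/
open Finset

/-- For `a, b ≥ 1` and `e ≥ 2`: `e^a + e^b ≤ e^(a+b-1) + e`. -/
lemma aux_p0 (e : ℤ) (he : 2 ≤ e) (a b : ℕ) (ha : 1 ≤ a) (hb : 1 ≤ b) :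
    e ^ a + e ^ b ≤ e ^ (a + b - 1) + e := by
  obtain ⟨a', rfl⟩ := Nat.exists_eq_add_of_le ha
  obtain ⟨b', rfl⟩ := Nat.exists_eq_add_of_le hb
  have hx : (1:ℤ) ≤ e ^ a' := by
    calc (1:ℤ) = 1 ^ a' := (one_pow a').symm
      _ ≤ e ^ a' := pow_le_pow_left₀ (by norm_num) (by linarith) a'
  have hy : (1:ℤ) ≤ e ^ b' := by
    calc (1:ℤ) = 1 ^ b' := (one_pow b').symm
      _ ≤ e ^ b' := pow_le_pow_left₀ (by norm_num) (by linarith) b'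
  have hexp : 1 + a' + (1 + b') - 1 = 1 + (a' + b') := by omega
  rw [hexp]
  have key : e ^ a' + e ^ b' ≤ e ^ a' * e ^ b' + 1 := by nlinarith
  calc e ^ (1 + a') + e ^ (1 + b') = e * (e ^ a' + e ^ b') := by ring
    _ ≤ e * (e ^ a' * e ^ b' + 1) := by
        exact mul_le_mul_of_nonneg_left key (by linarith)
    _ = e ^ (1 + (a' + b')) + e := by ring

/-- For `a, b ≥ 2` and `e ≥ 2`: `e^a + e^b ≤ e^(a+b-1)`. -/
lemma aux_p1 (e : ℤ) (he : 2 ≤ e) (a b : ℕ) (ha : 2 ≤ a) (hb : 2 ≤ b) :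
    e ^ a + e ^ b ≤ e ^ (a + b - 1) := by
  obtain ⟨a', rfl⟩ := Nat.exists_eq_add_of_le ha
  obtain ⟨b', rfl⟩ := Nat.exists_eq_add_of_le hb
  have hx : (1:ℤ) ≤ e ^ a' := by
    calc (1:ℤ) = 1 ^ a' := (one_pow a').symm
      _ ≤ e ^ a' := pow_le_pow_left₀ (by norm_num) (by linarith) a'
  have hy : (1:ℤ) ≤ e ^ b' := by
    calc (1:ℤ) = 1 ^ b' := (one_pow b').symm
      _ ≤ e ^ b' := pow_le_pow_left₀ (by norm_num) (by linarith) b'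
  have hexp : 2 + a' + (2 + b') - 1 = 3 + (a' + b') := by omega
  rw [hexp]
  have h2x : (2:ℤ) ≤ e * e ^ a' := by nlinarith
  have h2y : (2:ℤ) ≤ e * e ^ b' := by nlinarith
  have key : e * (e ^ a') + e * (e ^ b') ≤ e * e ^ a' * (e * e ^ b') := by
    nlinarith [mul_nonneg (sub_nonneg.mpr h2x) (sub_nonneg.mpr h2y)]
  calc e ^ (2 + a') + e ^ (2 + b') = e * (e * e ^ a' + e * e ^ b') := by ring
    _ ≤ e * (e * e ^ a' * (e * e ^ b')) := by
        exact mul_le_mul_of_nonneg_left key (by linarith)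
    _ = e ^ (3 + (a' + b')) := by ring

/-- `N ≤ 2^(N-2)` for `N ≥ 4`. -/
lemma aux_n : ∀ N : ℕ, 4 ≤ N → N ≤ 2 ^ (N - 2) := by
  intro N hN
  induction N, hN using Nat.le_induction with
  | base => norm_num
  | succ k hk ih =>
    have h1 : k + 1 - 2 = (k - 2) + 1 := by omega
    rw [h1, pow_succ]
    omega

/-- `(e+1)(t-1) + 1 ≤ e^t` for `t ≥ 2`, `e ≥ 2`. -/
lemma aux_t (e : ℤ) (he : 2 ≤ e) : ∀ t : ℕ, 2 ≤ t → (e + 1) * ((t:ℤ) - 1) + 1 ≤ e ^ t := by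
  intro t ht
  induction t, ht using Nat.le_induction with
  | base => push_cast; nlinarith
  | succ k hk ih =>
    have h2 : e ^ 2 ≤ e ^ k := pow_le_pow_right₀ (by linarith) hk
    have hpos : (0:ℤ) ≤ e ^ k := by positivity
    have hstep : e ^ (k+1) = e * e ^ k := by ring
    push_cast
    push_cast at ih
    nlinarith

/-- Bound on sums of powers: for `r ≥ 1` with all `m i ≥ 1`,
`∑_{i<r} e^(m i) ≤ e^(A - r + 1) + (r-1)e` where `A = ∑ m i`. -/
lemma aux_sum (e : ℤ) (he : 2 ≤ e) (m : ℕ → ℕ) :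
    ∀ r : ℕ, 1 ≤ r → (∀ i < r, 1 ≤ m i) →
    ∑ i ∈ range r, e ^ (m i) ≤ e ^ ((∑ i ∈ range r, m i) - r + 1) + ((r:ℤ) - 1) * e := by
  intro r hr
  induction r, hr using Nat.le_induction with
  | base =>
    intro hm
    have h0 : 1 ≤ m 0 := hm 0 (by norm_num)
    have : m 0 - 1 + 1 = m 0 := by omega
    simp [this]
  | succ k hk ih =>
    intro hm
    have h1 : ∀ i < k, 1 ≤ m i := fun i hi => hm i (by omega)
    have ihk := ih h1
    have hmk : 1 ≤ m k := hm k (by omega)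
    have hAk : k ≤ ∑ i ∈ range k, m i := by
      calc k = ∑ _i ∈ range k, 1 := by simp
        _ ≤ _ := Finset.sum_le_sum fun i hi => h1 i (mem_range.mp hi)
    rw [Finset.sum_range_succ, Finset.sum_range_succ]
    set A := ∑ i ∈ range k, m i with hA
    have key := aux_p0 e he (A - k + 1) (m k) (by omega) hmk
    have hexp : (A - k + 1) + m k - 1 = A + m k - (k+1) + 1 := by omega
    rw [hexp] at key
    push_cast
    linarith

/-- Final counting inequality. -/
lemma aux_final (e : ℤ) (he : 2 ≤ e) (t N : ℕ) (ht : 2 ≤ t) (htN : t ≤ N) (hN : 4 ≤ N) :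
    (e + 1) * ((t:ℤ) - 1) + e ^ (N - t + 1) < e ^ N := by
  rcases eq_or_lt_of_le htN with heq | hlt
  · subst heq
    have h1 : t - t + 1 = 1 := by omega
    rw [h1, pow_one]
    have h2 : (t:ℤ) ≤ 2 ^ (t - 2) := by exact_mod_cast aux_n t hN
    have h3 : (2:ℤ) ^ (t - 2) ≤ e ^ (t - 2) := pow_le_pow_left₀ (by norm_num) he _
    have h4 : e ^ t = e ^ 2 * e ^ (t - 2) := by
      rw [← pow_add]; congr 1; omega
    have h5 : (0:ℤ) ≤ e ^ (t - 2) := by positivity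
    have h6 : e ^ 2 * (t:ℤ) ≤ e ^ 2 * e ^ (t - 2) :=
      mul_le_mul_of_nonneg_left (h2.trans h3) (by positivity)
    have h7 : (1:ℤ) * (t:ℤ) ≤ (e ^ 2 - e - 1) * (t:ℤ) :=
      mul_le_mul_of_nonneg_right (by nlinarith) (by positivity)
    have hcast : (4:ℤ) ≤ (t:ℤ) := by exact_mod_cast hN
    nlinarith [h4, h6, h7, hcast]
  · have hb : 2 ≤ N - t + 1 := by omega
    have h1 := aux_t e he t ht
    have h2 := aux_p1 e he t (N - t + 1) ht hb
    have hexp : t + (N - t + 1) - 1 = N := by omega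
    rw [hexp] at h2
    linarith

theorem stmt_3 (d n r s t : ℕ) (hd : 3 ≤ d) (hn : 2 ≤ n)
    (hrs : r ≤ s) (hst : s ≤ t) (ht : 2 ≤ t) (hne : 1 ≤ r + (t - s))
    (m : ℕ → ℕ) (hm : ∀ i < t, 1 ≤ m i) (hsum : ∑ i ∈ Finset.range t, m i = n + 2) :
    ((1 : ℤ) - d) ^ (n + 2) ≠
      1 - r - d * ((t : ℤ) - s) + ∑ i ∈ Finset.range r, ((1 : ℤ) - d) ^ (m i) := by
  intro heq
  obtain ⟨e, hd', he⟩ : ∃ e : ℤ, (d:ℤ) = e + 1 ∧ 2 ≤ e :=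
    ⟨(d:ℤ) - 1, by ring, by push_cast; omega⟩
  have he0 : (0:ℤ) ≤ e := by linarith
  have h1d : (1:ℤ) - (d:ℤ) = -e := by rw [hd']; ring
  set N := n + 2 with hN
  have hN4 : 4 ≤ N := by omega
  have hrt : r ≤ t := hrs.trans hst
  have htN : t ≤ N := by
    calc t = ∑ _i ∈ range t, 1 := by simp
      _ ≤ ∑ i ∈ range t, m i := Finset.sum_le_sum fun i hi => hm i (mem_range.mp hi)
      _ = N := hsum
  -- split the sum to bound A = ∑_{i<r} m i
  have hsplit : ∑ i ∈ range r, m i + ∑ i ∈ Ico r t, m i = ∑ i ∈ range t, m i := by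
    rw [range_eq_Ico, range_eq_Ico]
    exact Finset.sum_Ico_consecutive m (Nat.zero_le r) hrt
  have hIco : t - r ≤ ∑ i ∈ Ico r t, m i := by
    calc t - r = ∑ _i ∈ Ico r t, 1 := by simp
      _ ≤ _ := Finset.sum_le_sum fun i hi => hm i (mem_Ico.mp hi).2
  set A := ∑ i ∈ range r, m i with hA
  have hAbound : A + (t - r) ≤ N := by omega
  have hrA : r ≤ A := by
    calc r = ∑ _i ∈ range r, 1 := by simp
      _ ≤ ∑ i ∈ range r, m i := Finset.sum_le_sum fun i hi => hm i (by
          have := mem_range.mp hi; omega)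
  -- rewrite heq
  rw [h1d] at heq
  have habsL : |(-e) ^ N| = e ^ N := by
    rw [abs_pow, abs_neg, abs_of_nonneg he0]
  -- bound on the sum of powers part
  have hS : |∑ i ∈ range r, (-e) ^ (m i)| ≤ ∑ i ∈ range r, e ^ (m i) := by
    refine (Finset.abs_sum_le_sum_abs _ _).trans (le_of_eq ?_)
    refine Finset.sum_congr rfl fun i hi => ?_
    rw [abs_pow, abs_neg, abs_of_nonneg he0]
  set B := t - s with hB
  have hcastB : (t:ℤ) - (s:ℤ) = (B:ℤ) := by omega
  -- the key bound : |RHS| ≤ (e+1)(t-1) + e^(N-t+1)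
  have hkey : |1 - (r:ℤ) - d * ((t:ℤ) - s) + ∑ i ∈ range r, (-e) ^ (m i)|
      ≤ (e + 1) * ((t:ℤ) - 1) + e ^ (N - t + 1) := by
    rcases Nat.eq_zero_or_pos r with hr0 | hr1
    · subst hr0
      simp only [Finset.range_zero, Finset.sum_empty, Nat.cast_zero, sub_zero, add_zero]
      have hB1 : 1 ≤ B := by omega
      have hval : |1 - (d:ℤ) * ((t:ℤ) - s)| ≤ (e + 1) * (B:ℤ) - 1 := by
        rw [hd', hcastB]
        have h1 : (3:ℤ) ≤ (e + 1) * (B:ℤ) := by nlinarith [show (1:ℤ) ≤ (B:ℤ) by exact_mod_cast hB1]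
        rw [abs_of_nonpos (by linarith)]
        linarith
      have he1 : e ≤ e ^ (N - t + 1) := by
        calc e = e ^ 1 := (pow_one e).symm
          _ ≤ e ^ (N - t + 1) := pow_le_pow_right₀ (by linarith) (by omega)
      have hBt : (B:ℤ) ≤ (t:ℤ) := by
        have : B ≤ t := by omega
        exact_mod_cast this
      calc |1 - (d:ℤ) * ((t:ℤ) - s)| ≤ (e + 1) * (B:ℤ) - 1 := hval
        _ ≤ (e + 1) * (t:ℤ) - 1 := by nlinarith
        _ = (e + 1) * ((t:ℤ) - 1) + e := by ring
        _ ≤ _ := by linarith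
    · have hsum_bound := aux_sum e he m r hr1 (fun i hi => hm i (by omega))
      rw [← hA] at hsum_bound
      have htri : |1 - (r:ℤ) - d * ((t:ℤ) - s) + ∑ i ∈ range r, (-e) ^ (m i)|
          ≤ |1 - (r:ℤ)| + |(d:ℤ) * ((t:ℤ) - s)| + |∑ i ∈ range r, (-e) ^ (m i)| := by
        calc _ ≤ |1 - (r:ℤ) - d * ((t:ℤ) - s)| + |∑ i ∈ range r, (-e) ^ (m i)| :=
              abs_add_le _ _
          _ ≤ _ := by
              have := abs_sub (1 - (r:ℤ)) ((d:ℤ) * ((t:ℤ) - s))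
              linarith [abs_sub_abs_le_abs_sub (1 - (r:ℤ)) ((d:ℤ) * ((t:ℤ) - s)),
                abs_sub ((1:ℤ) - (r:ℤ)) ((d:ℤ) * ((t:ℤ) - s))]
      have h1r : |1 - (r:ℤ)| = (r:ℤ) - 1 := by
        rw [abs_of_nonpos]
        · ring
        · have : (1:ℤ) ≤ (r:ℤ) := by exact_mod_cast hr1
          linarith
      have hdts : |(d:ℤ) * ((t:ℤ) - s)| = (e + 1) * (B:ℤ) := by
        rw [hd', hcastB, abs_of_nonneg]
        positivity
      -- e^(A - r + 1) ≤ e^(N - t + 1)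
      have hpow : e ^ (A - r + 1) ≤ e ^ (N - t + 1) :=
        pow_le_pow_right₀ (by linarith) (by omega)
      have hrB : (r:ℤ) - 1 + (B:ℤ) ≤ (t:ℤ) - 1 := by
        have : r + B ≤ t := by omega
        have h := Nat.cast_le (α := ℤ) |>.mpr this
        push_cast at h
        linarith
      rw [h1r, hdts] at htri
      calc |1 - (r:ℤ) - d * ((t:ℤ) - s) + ∑ i ∈ range r, (-e) ^ (m i)|
          ≤ ((r:ℤ) - 1) + (e + 1) * (B:ℤ) + (e ^ (A - r + 1) + ((r:ℤ) - 1) * e) := by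
            linarith
        _ = (e + 1) * (((r:ℤ) - 1) + (B:ℤ)) + e ^ (A - r + 1) := by ring
        _ ≤ (e + 1) * ((t:ℤ) - 1) + e ^ (N - t + 1) := by
            have hmul := mul_le_mul_of_nonneg_left hrB (by linarith : (0:ℤ) ≤ e + 1)
            linarith [hpow]
  have hfin := aux_final e he t N ht htN hN4
  rw [← heq, habsL] at hkey
  linarith
end

section
/- Let N ≥ 3 be an integer and let ζ be a root of unity in the ring of integers of an algebraic closure of Q_ℓ (or in the complex numbers) such that ζ ≡ 1 modulo N (i.e., (ζ - 1)/N is an algebraic integer). Then ζ = 1. -/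
set_option maxHeartbeats 1000000 in
theorem stmt_10 (N : ℕ) (hN : 3 ≤ N) (ζ : ℂ) (hζ : IsIntegral ℤ ζ)
    (hroot : ∃ k : ℕ, 1 ≤ k ∧ ζ ^ k = 1)
    (hcong : ∃ δ : ℂ, IsIntegral ℤ δ ∧ ζ - 1 = (N : ℂ) * δ) :
    ζ = 1 := by
  obtain ⟨k, hk1, hk2⟩ := hroot
  obtain ⟨δ, hδint, hδ⟩ := hcong
  have hN0 : (N : ℂ) ≠ 0 := Nat.cast_ne_zero.mpr (by omega)
  -- it suffices to show δ = 0
  suffices hd0 : δ = 0 by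
    have := hδ
    rw [hd0, mul_zero, sub_eq_zero] at this
    exact this
  by_contra hd0
  set K : IntermediateField ℚ ℂ := IntermediateField.adjoin ℚ {ζ} with hK
  have hζmem : ζ ∈ K := IntermediateField.subset_adjoin ℚ {ζ} rfl
  have hζalg : IsAlgebraic ℚ ζ := (hζ.tower_top (R := ℤ) (B := ℂ)).isAlgebraic
  haveI : FiniteDimensional ℚ K := IntermediateField.adjoin.finiteDimensional hζalg.isIntegral
  have hδmem : δ ∈ K := by
    have : δ = (ζ - 1) * ((N : ℂ))⁻¹ := by field_simp [hδ]; linear_combination -hδ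
    rw [this]
    exact mul_mem (sub_mem hζmem (one_mem K)) (inv_mem (by exact_mod_cast K.natCast_mem N))
  set ζK : K := ⟨ζ, hζmem⟩ with hζK
  set δK : K := ⟨δ, hδmem⟩ with hδK
  have hrel : ζK - 1 = (N : K) * δK := by
    apply Subtype.ext
    push_cast
    exact hδ
  have hδKint : IsIntegral ℤ δK := by
    rwa [← isIntegral_algebraMap_iff (algebraMap K ℂ).injective]
  -- the norm of δK
  have hnormint : IsIntegral ℤ (Algebra.norm ℚ δK) := Algebra.isIntegral_norm ℚ hδKint
  obtain ⟨m, hm⟩ := IsIntegrallyClosed.isIntegral_iff.mp hnormint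
  have hδK0 : δK ≠ 0 := fun h => hd0 (by simpa [hδK] using congrArg Subtype.val h)
  have hnorm0 : Algebra.norm ℚ δK ≠ 0 := by
    rwa [Ne, Algebra.norm_eq_zero_iff]
  have hm0 : m ≠ 0 := by rintro rfl; simp at hm; exact hnorm0 hm.symm
  have h1le : (1 : ℚ) ≤ |Algebra.norm ℚ δK| := by
    rw [← hm]
    have h1 : (1 : ℤ) ≤ |m| := Int.one_le_abs hm0
    have : ((1:ℤ) : ℚ) ≤ (|m| : ℚ) := by exact_mod_cast h1
    simpa [eq_ratCast, Rat.cast_abs] using this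
  -- bound the norm via embeddings
  have hprod : (algebraMap ℚ ℂ) (Algebra.norm ℚ δK) = ∏ σ : K →ₐ[ℚ] ℂ, σ δK :=
    Algebra.norm_eq_prod_embeddings ℚ ℂ δK
  have hbound : ∀ σ : K →ₐ[ℚ] ℂ, ‖σ δK‖ ≤ 2 / 3 := by
    intro σ
    have hζσ : ‖σ ζK‖ = 1 := by
      have hpow : (σ ζK) ^ k = 1 := by
        rw [← map_pow]
        have : ζK ^ k = 1 := by
          apply Subtype.ext; push_cast; exact hk2
        rw [this, map_one]
      have : ‖σ ζK‖ ^ k = 1 := by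
        rw [← norm_pow, hpow, norm_one]
      have habs := norm_nonneg (σ ζK)
      by_contra hne
      rcases lt_or_gt_of_ne hne with hlt | hgt
      · have h2 : ‖σ ζK‖ ^ k < 1 := pow_lt_one₀ habs hlt (by omega)
        linarith
      · have h2 : 1 < ‖σ ζK‖ ^ k := one_lt_pow₀ hgt (by omega)
        linarith
    have hrel' : σ ζK - 1 = (N : ℂ) * σ δK := by
      have := congrArg σ hrel
      simpa [map_sub, map_one, map_mul, map_natCast] using this
    have : ‖(N : ℂ) * σ δK‖ ≤ 2 := by
      rw [← hrel']
      calc ‖σ ζK - 1‖ ≤ ‖σ ζK‖ + ‖(1 : ℂ)‖ := by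
            simpa using norm_sub_le (σ ζK) 1
        _ = 2 := by rw [hζσ, norm_one]; norm_num
    rw [norm_mul, Complex.norm_natCast] at this
    have hN3 : (3 : ℝ) ≤ (N : ℝ) := by exact_mod_cast hN
    nlinarith [norm_nonneg (σ δK)]
  have hcard : 1 ≤ Fintype.card (K →ₐ[ℚ] ℂ) :=
    Fintype.card_pos_iff.mpr ⟨IsScalarTower.toAlgHom ℚ K ℂ⟩
  have habs2 : ‖(algebraMap ℚ ℂ) (Algebra.norm ℚ δK)‖
      ≤ (2 / 3 : ℝ) ^ Fintype.card (K →ₐ[ℚ] ℂ) := by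
    rw [hprod, norm_prod]
    calc ∏ σ : K →ₐ[ℚ] ℂ, ‖σ δK‖ ≤ ∏ _σ : K →ₐ[ℚ] ℂ, (2 / 3 : ℝ) :=
          Finset.prod_le_prod (fun σ _ => norm_nonneg _) (fun σ _ => hbound σ)
      _ = (2 / 3 : ℝ) ^ Fintype.card (K →ₐ[ℚ] ℂ) := by
          rw [Finset.prod_const, Finset.card_univ]
  have hlt : ((2 : ℝ) / 3) ^ Fintype.card (K →ₐ[ℚ] ℂ) < 1 :=
    pow_lt_one₀ (by norm_num) (by norm_num) (by omega)
  have hge : (1 : ℝ) ≤ ‖(algebraMap ℚ ℂ) (Algebra.norm ℚ δK)‖ := by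
    rw [eq_ratCast, Complex.norm_ratCast]
    have : ((1:ℚ):ℝ) ≤ ((|Algebra.norm ℚ δK| : ℚ) : ℝ) := by exact_mod_cast h1le
    simpa [abs_of_nonneg, Rat.cast_abs] using this
  linarith
end

section
/- Let d ≥ 3, n ≥ 2 be integers and suppose r, s, t, m_1, ..., m_t satisfy: 0 ≤ r ≤ s ≤ t, t ≥ 2, m_i ≥ 1, ∑ m_i = n + 2, and (1-d)^{n+2} = 1 - r - d(t-s) + ∑_{i=1}^r (1-d)^{m_i}. Then r + (t - s) = 0, i.e., r = 0 and s = t. -/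
private lemma aux_pow_add (e a b : ℕ) (he : 1 ≤ e) : e ^ a + e ^ b ≤ e ^ (a + b) + 1 := by
  have ha : 1 ≤ e ^ a := Nat.one_le_pow _ _ he
  have hb : 1 ≤ e ^ b := Nat.one_le_pow _ _ he
  have hab : e ^ (a + b) = e ^ a * e ^ b := pow_add e a b
  nlinarith

private lemma aux_sum_pow (e : ℕ) (he : 1 ≤ e) (p : ℕ → ℕ) :
    ∀ r : ℕ, ∑ i ∈ Finset.range (r + 1), e ^ p i ≤
      e ^ (∑ i ∈ Finset.range (r + 1), p i) + r := by
  intro r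
  induction r with
  | zero => simp
  | succ r ih =>
    rw [Finset.sum_range_succ, Finset.sum_range_succ (f := p)]
    have h2 := aux_pow_add e (∑ i ∈ Finset.range (r + 1), p i) (p (r + 1)) he
    linarith

private lemma aux_N : ∀ n : ℕ, 2 ≤ n → 2 * n + 3 < 2 ^ (n + 1) := by
  intro n hn
  induction n with
  | zero => omega
  | succ k ih =>
    rcases Nat.lt_or_ge k 2 with h | h
    · have hk : k = 1 := by omega
      subst hk; norm_num
    · have := ih h
      have h2 : (2:ℕ) ^ (k + 2) = 2 * 2 ^ (k + 1) := by ring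
      omega

private lemma aux_n2 (n : ℕ) (hn : 2 ≤ n) : n + 2 ≤ 2 ^ n := by
  have h1 := aux_N n hn
  have h2 : (2:ℕ) ^ (n + 1) = 2 * 2 ^ n := by ring
  omega

private lemma aux_D (e : ℕ) (he : 2 ≤ e) : ∀ a : ℕ, (e + 1) * (a + 1) + 1 ≤ e ^ (a + 2) := by
  intro a
  induction a with
  | zero =>
    have h : e ^ (0 + 2) = e * e := by ring
    nlinarith
  | succ a ih =>
    have h1 : e ^ (a + 3) = e * e ^ (a + 2) := by ring
    have h2 : e ^ 1 ≤ e ^ (a + 2) := Nat.pow_le_pow_right (by omega) (by omega)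
    have h3 : e ^ 1 = e := pow_one e
    nlinarith

private lemma aux_G (e n t : ℕ) (he : 2 ≤ e) (hn : 2 ≤ n) (ht2 : 2 ≤ t) (htn : t ≤ n + 2) :
    (e + 1) * (t - 1) + e ^ (n + 3 - t) < e ^ (n + 2) := by
  rcases Nat.lt_or_ge t (n + 2) with hlt | hge
  · have hD := aux_D e he (t - 2)
    rw [show t - 2 + 1 = t - 1 by omega, show t - 2 + 2 = t by omega] at hD
    have h1 : e ^ t ≤ e ^ (n + 1) := Nat.pow_le_pow_right (by omega) (by omega)
    have h2 : e ^ (n + 3 - t) ≤ e ^ (n + 1) := Nat.pow_le_pow_right (by omega) (by omega)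
    have h3 : (e:ℕ) ^ (n + 2) = e * e ^ (n + 1) := by rw [← pow_succ']
    have h4 : 2 * e ^ (n + 1) ≤ e * e ^ (n + 1) := Nat.mul_le_mul_right _ he
    omega
  · have hteq : t = n + 2 := by omega
    subst hteq
    rw [show n + 3 - (n + 2) = 1 by omega, pow_one]
    have hN := aux_N n hn
    have h2 : (2:ℕ) ^ (n + 1) ≤ e ^ (n + 1) := Nat.pow_le_pow_left he _
    have h3 : (e:ℕ) ^ (n + 2) = e * e ^ (n + 1) := by rw [← pow_succ']
    have h4 : e * (2 * n + 4) ≤ e * e ^ (n + 1) := Nat.mul_le_mul_left e (by omega)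
    rw [show n + 2 - 1 = n + 1 by omega]
    nlinarith

theorem stmt_15 (d n r s t : ℕ) (hd : 3 ≤ d) (hn : 2 ≤ n)
    (hrs : r ≤ s) (hst : s ≤ t) (ht : 2 ≤ t)
    (m : ℕ → ℕ) (hm : ∀ i < t, 1 ≤ m i) (hsum : ∑ i ∈ Finset.range t, m i = n + 2)
    (heq : ((1 : ℤ) - d) ^ (n + 2) =
      1 - r - d * ((t : ℤ) - s) + ∑ i ∈ Finset.range r, ((1 : ℤ) - d) ^ (m i)) :
    r = 0 ∧ s = t := by
  by_cases hcase : r = 0 ∧ s = t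
  · exact hcase
  exfalso
  set e := d - 1 with hedef
  have he : 2 ≤ e := by omega
  have hd' : d = e + 1 := by omega
  have hrt : r ≤ t := le_trans hrs hst
  set u := t - s with hudef
  have hru : 1 ≤ r + u := by
    rcases Decidable.not_and_iff_or_not.mp hcase with h | h <;> omega
  -- t ≤ n + 2
  have htn : t ≤ n + 2 := by
    have h1 : (Finset.range t).card • 1 ≤ ∑ i ∈ Finset.range t, m i :=
      Finset.card_nsmul_le_sum _ _ _ (fun i hi => hm i (Finset.mem_range.mp hi))
    simpa [hsum] using h1
  -- sum split : M + (t - r) ≤ n + 2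
  have hMle : (∑ i ∈ Finset.range r, m i) + (t - r) ≤ n + 2 := by
    have hsplit : ∑ i ∈ Finset.range r, m i + ∑ i ∈ Finset.Ico r t, m i
        = ∑ i ∈ Finset.range t, m i := by
      have h := Finset.sum_Ico_consecutive (f := m) (Nat.zero_le r) hrt
      simp only [← Finset.range_eq_Ico] at h
      exact h
    have hcard : (t - r) • 1 ≤ ∑ i ∈ Finset.Ico r t, m i := by
      have := Finset.card_nsmul_le_sum (Finset.Ico r t) m 1
        (fun i hi => hm i (Finset.mem_Ico.mp hi).2)
      simpa using this
    simp only [smul_eq_mul, mul_one] at hcard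
    omega
  -- abs manipulation
  have hxd : (1 : ℤ) - d = -(e : ℤ) := by rw [hd']; push_cast; ring
  have habs1 : |((1:ℤ) - d) ^ (n + 2)| = ((e:ℕ) : ℤ) ^ (n + 2) := by
    rw [hxd, abs_pow, abs_neg, abs_of_nonneg (by positivity)]
  have hS : |∑ i ∈ Finset.range r, ((1:ℤ) - d) ^ (m i)|
      ≤ ((∑ i ∈ Finset.range r, e ^ m i : ℕ) : ℤ) := by
    push_cast
    refine (Finset.abs_sum_le_sum_abs _ _).trans ?_
    refine Finset.sum_le_sum (fun i hi => ?_)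
    rw [hxd, abs_pow, abs_neg, abs_of_nonneg (by positivity)]
  have hts : ((t:ℤ) - s) = ((u : ℕ) : ℤ) := by omega
  have hlin : |1 - (r:ℤ) - d * ((t:ℤ) - s)| = (r:ℤ) + d * u - 1 := by
    rw [hts]
    have h2 : (1:ℤ) - r - d * u ≤ 0 := by
      have hA : (1:ℤ) ≤ (r:ℤ) + (u:ℤ) := by exact_mod_cast hru
      have hd3 : (3:ℤ) ≤ (d:ℤ) := by exact_mod_cast hd
      nlinarith [Int.natCast_nonneg u, Int.natCast_nonneg r]
    calc |1 - (r:ℤ) - d * u| = |-(1 - (r:ℤ) - d * u)| := (abs_neg _).symm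
    _ = -(1 - (r:ℤ) - d * u) := abs_of_nonneg (by linarith)
    _ = (r:ℤ) + d * u - 1 := by ring
  have hmain : ((e:ℕ):ℤ) ^ (n + 2) ≤ (r:ℤ) + d * u - 1
      + ((∑ i ∈ Finset.range r, e ^ m i : ℕ) : ℤ) := by
    calc ((e:ℕ):ℤ) ^ (n + 2) = |((1:ℤ) - d) ^ (n + 2)| := habs1.symm
    _ = |1 - (r:ℤ) - d * ((t:ℤ) - s) + ∑ i ∈ Finset.range r, ((1:ℤ) - d) ^ (m i)| := by
        rw [heq]
    _ ≤ |1 - (r:ℤ) - d * ((t:ℤ) - s)| + |∑ i ∈ Finset.range r, ((1:ℤ) - d) ^ (m i)| :=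
        abs_add_le _ _
    _ ≤ _ := by rw [hlin]; linarith
  have hnat : e ^ (n + 2) + 1 ≤ r + d * u + ∑ i ∈ Finset.range r, e ^ m i := by
    have h := hmain
    push_cast at h
    have h2 : ((e ^ (n + 2) + 1 : ℕ) : ℤ) ≤ ((r + d * u + ∑ i ∈ Finset.range r, e ^ m i : ℕ) : ℤ) := by
      push_cast
      linarith
    exact_mod_cast h2
  -- now finish in ℕ
  rcases Nat.eq_zero_or_pos r with hr0 | hrpos
  · -- r = 0 case
    subst hr0
    simp only [Finset.range_zero, Finset.sum_empty, Nat.zero_add, add_zero] at hnat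
    have hun : u ≤ n + 2 := by omega
    have hdu : d * u ≤ (e + 1) * (n + 2) := by
      rw [hd']
      exact Nat.mul_le_mul_left _ hun
    have h1 : e + 1 ≤ e ^ 2 := by nlinarith
    have h2 : n + 2 ≤ 2 ^ n := aux_n2 n hn
    have h3 : (2:ℕ) ^ n ≤ e ^ n := Nat.pow_le_pow_left he n
    have h4 : (e + 1) * (n + 2) ≤ e ^ 2 * e ^ n := Nat.mul_le_mul h1 (h2.trans h3)
    have h5 : e ^ 2 * e ^ n = e ^ (n + 2) := by rw [← pow_add]; ring_nf
    omega
  · -- r ≥ 1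
    obtain ⟨r', rfl⟩ : ∃ r', r = r' + 1 := ⟨r - 1, by omega⟩
    obtain ⟨c, rfl⟩ : ∃ c, t = (r' + 1) + c := ⟨t - (r' + 1), by omega⟩
    have hmp : ∀ i ∈ Finset.range (r' + 1), e ^ m i = e ^ (m i - 1) * e := by
      intro i hi
      have hi' : i < r' + 1 + c := by
        have := Finset.mem_range.mp hi; omega
      have h1 : m i - 1 + 1 = m i := by have := hm i hi'; omega
      calc e ^ m i = e ^ (m i - 1 + 1) := by rw [h1]
      _ = e ^ (m i - 1) * e := pow_succ e _
    have hsplitS : ∑ i ∈ Finset.range (r' + 1), e ^ m i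
        = (∑ i ∈ Finset.range (r' + 1), e ^ (m i - 1)) * e := by
      rw [Finset.sum_mul]
      exact Finset.sum_congr rfl hmp
    have hL := aux_sum_pow e (by omega) (fun i => m i - 1) r'
    set P := ∑ i ∈ Finset.range (r' + 1), (m i - 1) with hPdef
    have hPM : (∑ i ∈ Finset.range (r' + 1), m i) = P + (r' + 1) := by
      have hcg : ∀ i ∈ Finset.range (r' + 1), m i = (m i - 1) + 1 := by
        intro i hi
        have hi' : i < r' + 1 + c := by
          have := Finset.mem_range.mp hi; omega
        have := hm i hi'
        omega
      rw [Finset.sum_congr rfl hcg, Finset.sum_add_distrib, Finset.sum_const,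
        Finset.card_range, smul_eq_mul, mul_one]
    have hPle : P + 1 ≤ n + 3 - (r' + 1 + c) := by omega
    have hSb : ∑ i ∈ Finset.range (r' + 1), e ^ m i ≤ e ^ (P + 1) + r' * e := by
      calc ∑ i ∈ Finset.range (r' + 1), e ^ m i
          = (∑ i ∈ Finset.range (r' + 1), e ^ (m i - 1)) * e := hsplitS
      _ ≤ (e ^ P + r') * e := Nat.mul_le_mul_right _ hL
      _ = e ^ (P + 1) + r' * e := by rw [pow_succ]; ring
    have hZ : e ^ (P + 1) ≤ e ^ (n + 3 - (r' + 1 + c)) :=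
      Nat.pow_le_pow_right (by omega) hPle
    have hdu : d * u ≤ d * c := Nat.mul_le_mul_left d (by omega)
    have hG := aux_G e n (r' + 1 + c) he hn (by omega) htn
    rw [show r' + 1 + c - 1 = r' + c by omega] at hG
    have hid : (r' + 1) + d * c + r' * e = (e + 1) * (r' + c) + 1 := by
      rw [hd']; ring
    -- combine
    have hfin : e ^ (n + 2) + 1 ≤ (e + 1) * (r' + c) + 1 + e ^ (n + 3 - (r' + 1 + c)) := by
      calc e ^ (n + 2) + 1 ≤ (r' + 1) + d * u + ∑ i ∈ Finset.range (r' + 1), e ^ m i := hnat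
      _ ≤ (r' + 1) + d * c + (e ^ (P + 1) + r' * e) := by
          have := hSb; omega
      _ ≤ (r' + 1) + d * c + (e ^ (n + 3 - (r' + 1 + c)) + r' * e) := by omega
      _ = (e + 1) * (r' + c) + 1 + e ^ (n + 3 - (r' + 1 + c)) := by
          rw [← hid]; ring
    omega
end
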